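/- arXiv:math/9803103 — 3 statements merged into one kernel-verified Lean document; each statement's English description precedes it below -/
import Mathlib

section
/- Let U be the subgroup of the symmetric group S_6 generated by the double transpositions (1 2)(3 4) and (3 4)(5 6) (a Klein four-group). Then Sha²_ω(U, M_6) ≠ 0, where the ℤ[S_6]-module M_6 is viewed as a ℤ[U]-module by restriction. -/
/-! Preliminaries: a lightweight theory of `G`-modules (abelian groups with a
distributive `G`-action, i.e. `ℤ[G]`-modules), lattices, permutation modules,
flasque modules and flasque resolutions, the norm-one-torus character lattice
`Mn n` over the symmetric group `S_n`, and low-degree group cohomology with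
the invariant `Ш²_ω`. -/

open Equiv

universe u

/-- A `G`-module: an additive commutative group with a distributive `G`-action
(equivalently, a `ℤ[G]`-module). -/
structure GMod (G : Type u) [Group G] : Type (u + 1) where
  carrier : Type u
  [isAddCommGroup : AddCommGroup carrier]
  [isDistribMulAction : DistribMulAction G carrier]

attribute [instance] GMod.isAddCommGroup GMod.isDistribMulAction

namespace GMod

variable {G : Type u} [Group G]

instance : CoeSort (GMod G) (Type u) := ⟨GMod.carrier⟩

/-- A morphism of `G`-modules is an additive map commuting with the `G`-action. -/
def IsEquivariant {M N : GMod G} (f : M →+ N) : Prop :=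
  ∀ (g : G) (m : M), f (g • m) = g • f m

/-- Two `G`-modules are isomorphic if there is an equivariant additive equivalence. -/
def Iso (M N : GMod G) : Prop :=
  ∃ e : M ≃+ N, ∀ (g : G) (m : M), e (g • m) = g • e m

/-- Restriction of a `G`-module along a group homomorphism `φ : H →* G`. -/
def res (M : GMod G) {H : Type u} [Group H] (φ : H →* G) : GMod H where
  carrier := M
  isDistribMulAction :=
    { smul := fun h m => φ h • m
      one_smul := fun m => by show φ 1 • m = m; simp
      mul_smul := fun a b m => by
        show φ (a * b) • m = φ a • (φ b • m)
        rw [map_mul, mul_smul]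
      smul_zero := fun a => by show φ a • (0 : M.carrier) = 0; simp
      smul_add := fun a x y => by
        show φ a • (x + y) = φ a • x + φ a • y
        simp [smul_add] }

/-- The direct sum of two `G`-modules. -/
def prod (M N : GMod G) : GMod G where
  carrier := M × N

/-- The direct sum of `k` copies of a `G`-module. -/
def copies (k : ℕ) (M : GMod G) : GMod G where
  carrier := Fin k → M

/-- A trivial `G`-module. -/
def triv (G : Type u) [Group G] (A : Type u) [AddCommGroup A] : GMod G where
  carrier := A
  isDistribMulAction :=
    { smul := fun _ a => a
      one_smul := fun _ => rfl
      mul_smul := fun _ _ _ => rfl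
      smul_zero := fun _ => rfl
      smul_add := fun _ _ _ => rfl }

/-- The permutation `G`-module `ℤ[X]` attached to an action `φ : G →* Perm X`,
realized as functions `X → ℤ` with `(g • f) x = f ((φ g)⁻¹ x)`. -/
def permMod {X : Type u} (φ : G →* Equiv.Perm X) : GMod G where
  carrier := X → ℤ
  isDistribMulAction :=
    { smul := fun g f => fun x => f ((φ g)⁻¹ x)
      one_smul := fun f => by funext x; show f ((φ 1)⁻¹ x) = f x; simp
      mul_smul := fun g h f => by
        funext x
        show f ((φ (g * h))⁻¹ x) = f ((φ h)⁻¹ ((φ g)⁻¹ x))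
        rw [map_mul, mul_inv_rev, Equiv.Perm.mul_apply]
      smul_zero := fun g => rfl
      smul_add := fun g a b => rfl }

/-- The subgroup of `X → ℤ` generated by the all-ones vector (for `X = G` this
is `ℤ · N_G`, the span of the norm element of the group algebra). -/
def normSub (X : Type u) : AddSubgroup (X → ℤ) :=
  AddSubgroup.zmultiples (fun _ => (1 : ℤ))

/-- The additive endomorphism of `X → ℤ` induced by a permutation of `X`. -/
def permHomAdd {X : Type u} (σ : Equiv.Perm X) : (X → ℤ) →+ (X → ℤ) where
  toFun f := fun x => f (σ⁻¹ x)
  map_zero' := rfl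
  map_add' _ _ := rfl

theorem normSub_le_comap {X : Type u} (σ : Equiv.Perm X) :
    normSub X ≤ (normSub X).comap (permHomAdd σ) := by
  intro f hf
  rcases AddSubgroup.mem_zmultiples_iff.mp hf with ⟨k, rfl⟩
  exact AddSubgroup.mem_zmultiples_iff.mpr ⟨k, by funext x; simp [permHomAdd]⟩

/-- The quotient of the permutation module `ℤ[X]` by the span of the all-ones
vector, as a `G`-module.  For `X = Fin n` with the tautological action of
`S_n` this is the lattice `M_n`; for `X = G` with the regular action this is
`ℤ[G]/ℤ·N_G`. -/
def permModQuot {X : Type u} (φ : G →* Equiv.Perm X) : GMod G where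
  carrier := (X → ℤ) ⧸ normSub X
  isDistribMulAction :=
    { smul := fun g q =>
        QuotientAddGroup.map _ _ (permHomAdd (φ g)) (normSub_le_comap (φ g)) q
      one_smul := fun q => QuotientAddGroup.induction_on q (fun f => by
        show QuotientAddGroup.map _ _ (permHomAdd (φ 1)) _ (QuotientAddGroup.mk f)
            = QuotientAddGroup.mk f
        rw [QuotientAddGroup.map_mk]
        congr 1
        funext x
        simp [permHomAdd])
      mul_smul := fun g h q => QuotientAddGroup.induction_on q (fun f => by
        show QuotientAddGroup.map _ _ (permHomAdd (φ (g * h))) _ (QuotientAddGroup.mk f)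
            = QuotientAddGroup.map _ _ (permHomAdd (φ g)) _
              (QuotientAddGroup.map _ _ (permHomAdd (φ h)) _ (QuotientAddGroup.mk f))
        rw [QuotientAddGroup.map_mk, QuotientAddGroup.map_mk, QuotientAddGroup.map_mk]
        congr 1
        funext x
        simp [permHomAdd, map_mul, mul_inv_rev, Equiv.Perm.mul_apply])
      smul_zero := fun g => map_zero _
      smul_add := fun g a b => map_add _ a b }

/-- The character lattice `M_n = ℤ[S_n/S_{n-1}] / ℤ·(1,…,1)` of the norm-one
torus of a degree-`n` generic extension: the quotient of `Fin n → ℤ` (with the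
coordinate-permuting action of `S_n`) by the span of the all-ones vector. -/
def Mn (n : ℕ) : GMod (Equiv.Perm (Fin n)) :=
  permModQuot (MonoidHom.id (Equiv.Perm (Fin n)))

/-- The natural permutation module `Fin n → ℤ` of `S_n`. -/
def stdMod (n : ℕ) : GMod (Equiv.Perm (Fin n)) :=
  permMod (MonoidHom.id (Equiv.Perm (Fin n)))

/-- The regular `G`-module `ℤ[G]`, realized as functions `G → ℤ`. -/
def regular (G : Type u) [Group G] : GMod G :=
  permMod (MulAction.toPermHom G G)

/-- The quotient `ℤ[G]/ℤ·N_G` of the regular module by the span of the norm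
element `N_G = Σ_{g ∈ G} g`. -/
def regModNorm (G : Type u) [Group G] : GMod G :=
  permModQuot (MulAction.toPermHom G G)

/-- A `G`-lattice: a `G`-module that is finitely generated and free over `ℤ`. -/
def IsLattice (M : GMod G) : Prop :=
  Module.Free ℤ M ∧ Module.Finite ℤ M

/-- A permutation `G`-lattice: one admitting a finite `ℤ`-basis permuted by `G`. -/
def IsPermutation (M : GMod G) : Prop :=
  ∃ (ι : Type u) (_ : Finite ι) (b : Module.Basis ι ℤ M) (f : G →* Equiv.Perm ι),
    ∀ (g : G) (i : ι), g • b i = b (f g i)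

/-- A stably permutation `G`-module: `N ⊕ P ≅ Q` for permutation modules `P, Q`. -/
def IsStablyPermutation (N : GMod G) : Prop :=
  ∃ P Q : GMod G, P.IsPermutation ∧ Q.IsPermutation ∧ Iso (N.prod P) Q

/-- A flasque `G`-module: `Ĥ⁻¹(G', N) = 0` for every subgroup `G' ≤ G`, i.e.
every `x` killed by the norm of `G'` is a sum of elements `g • y - y`. -/
def IsFlasque [Finite G] (N : GMod G) : Prop :=
  ∀ (H : Subgroup G) (x : N),
    (∑ g ∈ (Set.toFinite (H : Set G)).toFinset, g • x) = 0 →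
      x ∈ AddSubgroup.closure {z : N.carrier | ∃ g ∈ H, ∃ y : N.carrier, z = g • y - y}

/-- A flasque resolution `0 → M → S → N → 0`: a short exact sequence of
`G`-lattices with `S` a permutation module and `N` flasque. -/
def IsFlasqueResolution [Finite G] (M S N : GMod G) : Prop :=
  M.IsLattice ∧ S.IsLattice ∧ N.IsLattice ∧ S.IsPermutation ∧ N.IsFlasque ∧
    ∃ (i : M →+ S) (p : S →+ N),
      IsEquivariant i ∧ IsEquivariant p ∧
        Function.Injective i ∧ Function.Surjective p ∧ i.range = p.ker

/-! ### Low-degree group cohomology via inhomogeneous cocycles. -/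

/-- Inhomogeneous 2-cocycles of `G` with values in `M`. -/
def twoCocycles (M : GMod G) : AddSubgroup (G → G → M.carrier) where
  carrier := {f | ∀ g h k : G, g • f h k + f g (h * k) = f (g * h) k + f g h}
  zero_mem' := by intro g h k; simp
  add_mem' := by
    intro a b ha hb g h k
    simp only [Pi.add_apply, smul_add]
    rw [add_add_add_comm, ha g h k, hb g h k, add_add_add_comm]
  neg_mem' := by
    intro a ha g h k
    simp only [Pi.neg_apply, smul_neg, ← neg_add, ha g h k]

/-- The differential sending a 1-cochain to a 2-coboundary. -/
def dOne (M : GMod G) : (G → M.carrier) →+ (G → G → M.carrier) where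
  toFun c := fun g h => g • c h - c (g * h) + c g
  map_zero' := by funext g h; simp
  map_add' a b := by
    funext g h
    simp only [Pi.add_apply, smul_add]
    abel

/-- `H²(G, M)`: 2-cocycles modulo 2-coboundaries. -/
def H2 (M : GMod G) : Type u :=
  twoCocycles M ⧸ ((dOne M).range.addSubgroupOf (twoCocycles M))

instance (M : GMod G) : AddCommGroup (H2 M) :=
  inferInstanceAs (AddCommGroup (_ ⧸ _))

/-- 1-cocycles (crossed homomorphisms) of `G` with values in `M`. -/
def oneCocycles (M : GMod G) : AddSubgroup (G → M.carrier) where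
  carrier := {f | ∀ g h : G, f (g * h) = g • f h + f g}
  zero_mem' := by intro g h; simp
  add_mem' := by
    intro a b ha hb g h
    simp only [Pi.add_apply, smul_add, ha g h, hb g h]
    abel
  neg_mem' := by
    intro a ha g h
    simp only [Pi.neg_apply, smul_neg, ha g h]
    abel

/-- The differential sending a 0-cochain to a 1-coboundary. -/
def dZero (M : GMod G) : M.carrier →+ (G → M.carrier) where
  toFun m := fun g => g • m - m
  map_zero' := by funext g; simp
  map_add' a b := by
    funext g
    simp only [Pi.add_apply, smul_add]
    abel

/-- `H¹(G, M)`: 1-cocycles modulo 1-coboundaries. -/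
def H1 (M : GMod G) : Type u :=
  oneCocycles M ⧸ ((dZero M).range.addSubgroupOf (oneCocycles M))

instance (M : GMod G) : AddCommGroup (H1 M) :=
  inferInstanceAs (AddCommGroup (_ ⧸ _))

/-- Restriction of 2-cocycles along a group homomorphism `φ : H →* G`. -/
def resTwoCocycles (M : GMod G) {H : Type u} [Group H] (φ : H →* G) :
    twoCocycles M →+ twoCocycles (M.res φ) where
  toFun f := ⟨fun a b => f.1 (φ a) (φ b), by
    intro a b c
    show φ a • f.1 (φ b) (φ c) + f.1 (φ a) (φ (b * c))
        = f.1 (φ (a * b)) (φ c) + f.1 (φ a) (φ b)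
    rw [map_mul, map_mul]
    exact f.2 (φ a) (φ b) (φ c)⟩
  map_zero' := rfl
  map_add' _ _ := rfl

theorem coboundaries_le_comap_resTwoCocycles (M : GMod G) {H : Type u} [Group H]
    (φ : H →* G) :
    ((dOne M).range.addSubgroupOf (twoCocycles M)) ≤
      (((dOne (M.res φ)).range.addSubgroupOf (twoCocycles (M.res φ))).comap
        (resTwoCocycles M φ)) := by
  intro f hf
  rcases hf with ⟨c, hc⟩
  refine ⟨fun h => c (φ h), ?_⟩
  have hc' : ∀ g h : G, g • c h - c (g * h) + c g = f.1 g h := fun g h =>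
    congrFun (congrFun hc g) h
  funext a b
  show φ a • c (φ b) - c (φ (a * b)) + c (φ a) = f.1 (φ a) (φ b)
  rw [map_mul]
  exact hc' (φ a) (φ b)

/-- The restriction map `H²(G, M) → H²(H, M)` along `φ : H →* G`. -/
def resH2 (M : GMod G) {H : Type u} [Group H] (φ : H →* G) :
    H2 M →+ H2 (M.res φ) :=
  QuotientAddGroup.map _ _ (resTwoCocycles M φ)
    (coboundaries_le_comap_resTwoCocycles M φ)

/-- `Ш²_ω(G, M)`: the subgroup of `H²(G, M)` of classes whose restriction to
every cyclic subgroup `⟨g⟩ ≤ G` vanishes. -/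
def Sha2omega (M : GMod G) : AddSubgroup (H2 M) :=
  ⨅ g : G, (resH2 M ((Subgroup.zpowers g).subtype)).ker

end GMod

open GMod

/-- The Klein four-group `U = ⟨(1 2)(3 4), (3 4)(5 6)⟩ ⊆ S_6`
(in 0-based indexing: `⟨(0 1)(2 3), (2 3)(4 5)⟩`). -/
def kleinU : Subgroup (Equiv.Perm (Fin 6)) :=
  Subgroup.closure
    {Equiv.swap (0 : Fin 6) 1 * Equiv.swap 2 3, Equiv.swap (2 : Fin 6) 3 * Equiv.swap 4 5}

namespace ShaAux
open GMod Equiv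

abbrev pa : Equiv.Perm (Fin 6) := Equiv.swap 0 1 * Equiv.swap 2 3
abbrev pb : Equiv.Perm (Fin 6) := Equiv.swap 2 3 * Equiv.swap 4 5

lemma pa_mem : pa ∈ kleinU := Subgroup.subset_closure (Or.inl rfl)
lemma pb_mem : pb ∈ kleinU := Subgroup.subset_closure (Or.inr rfl)

def P (σ : Equiv.Perm (Fin 6)) : Prop := σ = 1 ∨ σ = pa ∨ σ = pb ∨ σ = pa * pb

lemma klein_cases : ∀ σ ∈ kleinU, P σ := by
  intro σ h
  induction h using Subgroup.closure_induction with
  | mem x hx => rcases hx with rfl | rfl; · exact Or.inr (Or.inl rfl)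
                · exact Or.inr (Or.inr (Or.inl rfl))
  | one => exact Or.inl rfl
  | mul x y hx hy ihx ihy =>
      rcases ihx with rfl | rfl | rfl | rfl <;> rcases ihy with rfl | rfl | rfl | rfl <;>
        first
          | exact Or.inl (by decide)
          | exact Or.inr (Or.inl (by decide))
          | exact Or.inr (Or.inr (Or.inl (by decide)))
          | exact Or.inr (Or.inr (Or.inr (by decide)))
  | inv x hx ihx =>
      rcases ihx with rfl | rfl | rfl | rfl <;>
        first
          | exact Or.inl (by decide)
          | exact Or.inr (Or.inl (by decide))
          | exact Or.inr (Or.inr (Or.inl (by decide)))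
          | exact Or.inr (Or.inr (Or.inr (by decide)))

abbrev MM : GMod ↥kleinU := (Mn 6).res kleinU.subtype

def mkM (v : Fin 6 → ℤ) : MM.carrier := QuotientAddGroup.mk v

lemma smul_mk (g : ↥kleinU) (v : Fin 6 → ℤ) :
    g • mkM v = mkM (fun i => v (((g : Equiv.Perm (Fin 6)))⁻¹ i)) := rfl

lemma mk_surj : Function.Surjective mkM := QuotientAddGroup.mk_surjective

lemma mk_eq_mk {v w : Fin 6 → ℤ} (k : ℤ) (h : ∀ i, w i - v i = k) : mkM v = mkM w := by
  refine QuotientAddGroup.eq.mpr ?_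
  exact AddSubgroup.mem_zmultiples_iff.mpr ⟨k, by funext i; simp [← h i]; ring⟩

def chi (σ : Equiv.Perm (Fin 6)) : ℤ := if σ 0 = 0 then 0 else 1

lemma chi_mul {σ τ : Equiv.Perm (Fin 6)} (hσ : P σ) (hτ : P τ) :
    chi (σ * τ) = chi σ + chi τ - 2 * chi σ * chi τ := by
  rcases hσ with rfl | rfl | rfl | rfl <;> rcases hτ with rfl | rfl | rfl | rfl <;> decide

lemma chi_one : chi ((1 : ↥kleinU) : Equiv.Perm (Fin 6)) = 0 := by decide

def xv : Fin 6 → ℤ := ![0, 0, 0, 0, 1, 1]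

def xM : MM.carrier := mkM xv

lemma smul_xM (g : ↥kleinU) : g • xM = xM := by
  have h := klein_cases _ g.2
  show g • mkM xv = mkM xv
  rw [smul_mk]
  rcases h with h | h | h | h <;> rw [show ((g : Equiv.Perm (Fin 6))) = _ from h] <;>
    exact congrArg mkM (by decide)

/-- The 2-cocycle `f(g,h) = χ(g)χ(h)·x`. -/
def fc (g h : ↥kleinU) : MM.carrier :=
  (chi (g : Equiv.Perm (Fin 6)) * chi (h : Equiv.Perm (Fin 6))) • xM

lemma smul_zsmul (g : ↥kleinU) (n : ℤ) (m : MM.carrier) : g • (n • m) = n • (g • m) :=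
  map_zsmul (DistribMulAction.toAddMonoidHom MM.carrier g) n m

lemma fc_cocycle : fc ∈ twoCocycles MM := by
  intro g h k
  show g • _ + _ = _ + _
  unfold fc
  rw [smul_zsmul, smul_xM, ← add_zsmul, ← add_zsmul]
  congr 1
  have hg := klein_cases _ g.2
  have hh := klein_cases _ h.2
  have hk := klein_cases _ k.2
  have e1 : chi ((h * k : ↥kleinU) : Equiv.Perm (Fin 6)) =
      chi (h : Equiv.Perm (Fin 6)) + chi (k : Equiv.Perm (Fin 6))
        - 2 * chi (h : Equiv.Perm (Fin 6)) * chi (k : Equiv.Perm (Fin 6)) := chi_mul hh hk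
  have e2 : chi ((g * h : ↥kleinU) : Equiv.Perm (Fin 6)) =
      chi (g : Equiv.Perm (Fin 6)) + chi (h : Equiv.Perm (Fin 6))
        - 2 * chi (g : Equiv.Perm (Fin 6)) * chi (h : Equiv.Perm (Fin 6)) := chi_mul hg hh
  rw [e1, e2]; ring

lemma zpowers_cases {g : ↥kleinU} (hg : g * g = 1) (u : ↥(Subgroup.zpowers g)) :
    (u : ↥kleinU) = 1 ∨ (u : ↥kleinU) = g := by
  obtain ⟨k, hk⟩ := Subgroup.mem_zpowers_iff.mp u.2
  have h2 : g ^ (2 : ℤ) = 1 := by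
    rw [show (2 : ℤ) = 1 + 1 by norm_num, zpow_add, zpow_one]; exact hg
  have hsplit : g ^ k = g ^ (k % 2) := by
    conv_lhs => rw [← Int.mul_ediv_add_emod k 2]
    rw [zpow_add, zpow_mul, h2, one_zpow, one_mul]
  rcases Int.emod_two_eq_zero_or_one k with h | h
  · left; rw [← hk, hsplit, h, zpow_zero]
  · right; rw [← hk, hsplit, h, zpow_one]

lemma dOne_apply {G : Type} [Group G] (M : GMod G) (c : G → M.carrier) (g h : G) :
    dOne M c g h = g • c h - c (g * h) + c g := rfl

lemma res_smul {g : ↥kleinU} (u : ↥(Subgroup.zpowers g)) (m : MM.carrier) :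
    (u • m : (MM.res (Subgroup.zpowers g).subtype).carrier) = (u : ↥kleinU) • m := rfl

lemma mk_add (v w : Fin 6 → ℤ) : mkM v + mkM w = mkM (v + w) := rfl

lemma res_zero (g : ↥kleinU) (hg : g * g = 1) (hchi : chi (g : Equiv.Perm (Fin 6)) = 0) :
    ∃ c, dOne (MM.res (Subgroup.zpowers g).subtype) c
      = fun u v : ↥(Subgroup.zpowers g) => fc (u : ↥kleinU) (v : ↥kleinU) := by
  refine ⟨0, ?_⟩
  rw [map_zero]
  funext u v
  have hcu : chi (((u : ↥kleinU)) : Equiv.Perm (Fin 6)) = 0 := by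
    rcases zpowers_cases hg u with h | h <;> rw [h] <;> first | exact chi_one | exact hchi
  show (0 : MM.carrier) = (chi _ * chi _) • xM
  rw [hcu, zero_mul, zero_smul]

lemma res_witness (g : ↥kleinU) (hg : g * g = 1) (hchi : chi (g : Equiv.Perm (Fin 6)) = 1)
    (Y : Fin 6 → ℤ) (hY : g • mkM Y + mkM Y = xM) :
    ∃ c, dOne (MM.res (Subgroup.zpowers g).subtype) c
      = fun u v : ↥(Subgroup.zpowers g) => fc (u : ↥kleinU) (v : ↥kleinU) := by
  refine ⟨fun u => chi (((u : ↥kleinU)) : Equiv.Perm (Fin 6))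
      • (mkM Y : (MM.res (Subgroup.zpowers g).subtype).carrier), ?_⟩
  funext u v
  show ((u : ↥kleinU) • (chi (((v : ↥kleinU)) : Equiv.Perm (Fin 6)) • mkM Y) : MM.carrier)
      - chi ((((u : ↥kleinU) * (v : ↥kleinU))) : Equiv.Perm (Fin 6)) • mkM Y
      + chi (((u : ↥kleinU)) : Equiv.Perm (Fin 6)) • mkM Y
      = (chi (((u : ↥kleinU)) : Equiv.Perm (Fin 6)) * chi (((v : ↥kleinU)) : Equiv.Perm (Fin 6))) • xM
  have e1 : ((1 : ↥kleinU) : Equiv.Perm (Fin 6)) = 1 := rfl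
  have hgP : (g : Equiv.Perm (Fin 6)) * (g : Equiv.Perm (Fin 6)) = 1 := by
    simpa using congrArg Subtype.val hg
  have c0 : chi (1 : Equiv.Perm (Fin 6)) = 0 := by decide
  rcases zpowers_cases hg u with hu | hu <;> rcases zpowers_cases hg v with hv | hv <;>
      rw [hu, hv]
  · rw [e1, one_mul]; simp [c0]
  · rw [e1, one_mul]; simp [c0]
  · rw [e1, mul_one]; simp [c0]
  · rw [hgP, hchi]; simpa [c0] using hY

lemma mem_sha :
    (QuotientAddGroup.mk ⟨fc, fc_cocycle⟩ : H2 MM) ∈ Sha2omega MM := by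
  rw [Sha2omega]; refine AddSubgroup.mem_iInf.mpr ?_
  intro g
  refine (AddMonoidHom.mem_ker).mpr ?_
  show QuotientAddGroup.map _ _ _ _ _ = 0
  rw [QuotientAddGroup.map_mk]; refine (QuotientAddGroup.eq_zero_iff _).mpr ?_
  rw [AddSubgroup.mem_addSubgroupOf,
    AddMonoidHom.mem_range]
  have hgg : ∀ h : Equiv.Perm (Fin 6), (g : Equiv.Perm (Fin 6)) = h → h * h = 1 → g * g = 1 := by
    intro h he hh
    have : (g : Equiv.Perm (Fin 6)) * (g : Equiv.Perm (Fin 6)) = 1 := by rw [he]; exact hh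
    exact Subtype.ext this
  rcases klein_cases _ g.2 with h | h | h | h
  · exact res_zero g (hgg _ h (by decide)) (by rw [h]; decide)
  · refine res_witness g (hgg _ h (by decide)) (by rw [h]; decide) ![-1, 0, -1, 0, 0, 0] ?_
    rw [smul_mk]
    conv_lhs => rw [show ((g : Equiv.Perm (Fin 6))) = pa from h]
    rw [mk_add]
    exact mk_eq_mk 1 (by decide)
  · exact res_zero g (hgg _ h (by decide)) (by rw [h]; decide)
  · refine res_witness g (hgg _ h (by decide)) (by rw [h]; decide) ![0, 0, 0, 0, 1, 0] ?_
    rw [smul_mk]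
    conv_lhs => rw [show ((g : Equiv.Perm (Fin 6))) = pa * pb from h]
    rw [mk_add]
    exact mk_eq_mk 0 (by decide)

def ga : ↥kleinU := ⟨pa, pa_mem⟩
def gb : ↥kleinU := ⟨pb, pb_mem⟩

lemma mk_sub (v w : Fin 6 → ℤ) : mkM v - mkM w = mkM (v - w) := rfl

lemma mk_eq_iff {v w : Fin 6 → ℤ} (h : mkM v = mkM w) : ∃ k : ℤ, ∀ i, w i - v i = k := by
  obtain ⟨k, hk⟩ := AddSubgroup.mem_zmultiples_iff.mp (QuotientAddGroup.eq.mp h)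
  refine ⟨k, fun i => ?_⟩
  have := congrFun hk i
  simp [Pi.smul_apply] at this
  omega

lemma not_coboundary (c : ↥kleinU → MM.carrier) : dOne MM c ≠ fc := by
  intro hc
  -- basic group facts
  have hgaga : ga * ga = 1 := Subtype.ext (by decide)
  have hgbgb : gb * gb = 1 := Subtype.ext (by decide)
  have hba : gb * ga = ga * gb := Subtype.ext (by decide)
  -- value of c at 1
  have hc1 : c 1 = 0 := by
    have h := congrFun (congrFun hc 1) 1
    rw [dOne_apply, one_smul, one_mul] at h
    have h0 : fc 1 1 = 0 := by
      simp [fc, show chi (1 : Equiv.Perm (Fin 6)) = 0 from by decide]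
    have h1 : c 1 - c 1 + c 1 = c 1 := by abel
    rw [h0, h1] at h
    exact h
  -- representatives
  obtain ⟨va, hva⟩ := mk_surj (c ga)
  obtain ⟨vb, hvb⟩ := mk_surj (c gb)
  obtain ⟨vc, hvc⟩ := mk_surj (c (ga * gb))
  -- values of the cocycle
  have hfaa : fc ga ga = mkM xv := by
    simp [fc, xM, show chi ((ga : Equiv.Perm (Fin 6))) = 1 from by decide]
  have hfab : fc ga gb = 0 := by
    simp [fc, show chi ((gb : Equiv.Perm (Fin 6))) = 0 from by decide]
  have hfba : fc gb ga = 0 := by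
    simp [fc, show chi ((gb : Equiv.Perm (Fin 6))) = 0 from by decide]
  have hfbb : fc gb gb = 0 := by
    simp [fc, show chi ((gb : Equiv.Perm (Fin 6))) = 0 from by decide]
  have hz : (0 : MM.carrier) = mkM 0 := rfl
  -- the four equations
  have Eaa := congrFun (congrFun hc ga) ga
  rw [dOne_apply, hgaga, hc1, ← hva, smul_mk, sub_zero, mk_add, hfaa] at Eaa
  have Eab := congrFun (congrFun hc ga) gb
  rw [dOne_apply, ← hva, ← hvb, ← hvc, smul_mk, mk_sub, mk_add, hfab, hz] at Eab
  have Eba := congrFun (congrFun hc gb) ga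
  rw [dOne_apply, hba, ← hva, ← hvb, ← hvc, smul_mk, mk_sub, mk_add, hfba, hz] at Eba
  have Ebb := congrFun (congrFun hc gb) gb
  rw [dOne_apply, hgbgb, hc1, ← hvb, smul_mk, sub_zero, mk_add, hfbb, hz] at Ebb
  obtain ⟨k1, h1⟩ := mk_eq_iff Eaa
  obtain ⟨k2, h2⟩ := mk_eq_iff Eab
  obtain ⟨k3, h3⟩ := mk_eq_iff Eba
  obtain ⟨k4, h4⟩ := mk_eq_iff Ebb
  -- coordinate equations
  have i12 := h1 2; have i14 := h1 4; have i15 := h1 5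
  have i22 := h2 2; have i24 := h2 4
  have i32 := h3 2; have i34 := h3 4
  have i40 := h4 0; have i42 := h4 2
  simp only [Pi.add_apply, Pi.sub_apply, Pi.zero_apply,
    show ((ga : Equiv.Perm (Fin 6)))⁻¹ (2 : Fin 6) = 3 from by decide,
    show ((ga : Equiv.Perm (Fin 6)))⁻¹ (4 : Fin 6) = 4 from by decide,
    show ((ga : Equiv.Perm (Fin 6)))⁻¹ (5 : Fin 6) = 5 from by decide,
    show ((gb : Equiv.Perm (Fin 6)))⁻¹ (0 : Fin 6) = 0 from by decide,
    show ((gb : Equiv.Perm (Fin 6)))⁻¹ (2 : Fin 6) = 3 from by decide,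
    show ((gb : Equiv.Perm (Fin 6)))⁻¹ (4 : Fin 6) = 5 from by decide,
    show xv 2 = 0 from by decide, show xv 4 = 1 from by decide,
    show xv 5 = 1 from by decide]
    at i12 i14 i15 i22 i24 i32 i34 i40 i42
  omega

end ShaAux

/-- For the Klein four-group `U = ⟨(1 2)(3 4), (3 4)(5 6)⟩ ⊆ S_6`, the
invariant `Ш²_ω(U, M_6)` is nontrivial. -/
theorem sha_klein_Mn6_nontrivial :
    Sha2omega ((Mn 6).res kleinU.subtype) ≠ ⊥ := by
  intro hbot
  have hmem := ShaAux.mem_sha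
  rw [hbot] at hmem; replace hmem := AddSubgroup.mem_bot.mp hmem
  replace hmem := (QuotientAddGroup.eq_zero_iff _).mp hmem
  rw [AddSubgroup.mem_addSubgroupOf] at hmem
  obtain ⟨c, hc⟩ := hmem
  exact ShaAux.not_coboundary c hc
end

section
/- Let G be a finite group and M a finitely generated ℤ[G]-module. If Sha²_ω(P, M|_P) = 0 for every prime p and every Sylow p-subgroup P of G, then Sha²_ω(G, M) = 0. Equivalently, the product of the restriction maps embeds Sha²_ω(G, M) into the product over primes p of Sha²_ω(Syl_p(G), M). -/
/-! Preliminaries: a lightweight theory of `G`-modules (abelian groups with a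
distributive `G`-action, i.e. `ℤ[G]`-modules), lattices, permutation modules,
flasque modules and flasque resolutions, the norm-one-torus character lattice
`Mn n` over the symmetric group `S_n`, and low-degree group cohomology with
the invariant `Ш²_ω`. -/

open Equiv

universe u

open GMod
section TransferAux

open GMod

variable {G : Type u} [Group G]

/-- Per-coset cocycle identity used in the transfer argument. -/
theorem per_coset (M : GMod G) (P : Subgroup G) (f : G → G → M.carrier)
    (hf : ∀ g h k : G, g • f h k + f g (h * k) = f (g * h) k + f g h)
    (c : P → M.carrier)
    (hc : ∀ p q : P, f ↑p ↑q = (↑p : G) • c q - c (p * q) + c p)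
    (g h s s₁ s₂ : G) (p₁ p₂ : P)
    (h1 : s * g = ↑p₁ * s₁) (h2 : s₁ * h = ↑p₂ * s₂) :
    g • (s₁⁻¹ • c p₂ - f s₁⁻¹ ↑p₂ + f h s₂⁻¹)
      - (s⁻¹ • c (p₁ * p₂) - f s⁻¹ ↑(p₁ * p₂) + f (g * h) s₂⁻¹)
      + (s⁻¹ • c p₁ - f s⁻¹ ↑p₁ + f g s₁⁻¹)
      = f g h := by
  have e1 : g * s₁⁻¹ = s⁻¹ * ↑p₁ := by
    have e : g = s⁻¹ * (↑p₁ * s₁) := by rw [← h1]; group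
    rw [e]; group
  have e2 : h * s₂⁻¹ = s₁⁻¹ * ↑p₂ := by
    have e : h = s₁⁻¹ * (↑p₂ * s₂) := by rw [← h2]; group
    rw [e]; group
  have hcp' : (↑p₁ : G) • c p₂ = f ↑p₁ ↑p₂ + c (p₁ * p₂) - c p₁ := by
    rw [hc p₁ p₂]; abel
  have k1 : s⁻¹ • f (↑p₁ : G) ↑p₂
      = f (g * s₁⁻¹) ↑p₂ + f s⁻¹ ↑p₁ - f s⁻¹ (↑p₁ * ↑p₂) := by
    have k := hf s⁻¹ ↑p₁ ↑p₂
    rw [show s⁻¹ * (↑p₁ : G) = g * s₁⁻¹ from e1.symm] at k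
    exact eq_sub_of_add_eq k
  have k2 : g • f s₁⁻¹ (↑p₂ : G)
      = f (g * s₁⁻¹) ↑p₂ + f g s₁⁻¹ - f g (h * s₂⁻¹) := by
    have k := hf g s₁⁻¹ ↑p₂
    rw [show s₁⁻¹ * (↑p₂ : G) = h * s₂⁻¹ from e2.symm] at k
    exact eq_sub_of_add_eq k
  have k3 : g • f h s₂⁻¹ = f (g * h) s₂⁻¹ + f g h - f g (h * s₂⁻¹) :=
    eq_sub_of_add_eq (hf g h s₂⁻¹)
  simp only [smul_sub, smul_add]
  rw [← mul_smul, e1, mul_smul, hcp']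
  simp only [smul_sub, smul_add]
  rw [k1, k2, k3, Subgroup.coe_mul]
  abel

end TransferAux
section TransferAux2

open GMod

variable {G : Type u} [Group G]

/-- Representative of the right coset `P·x`, obtained from `Quotient.out` on
the left coset of `x⁻¹`. -/
noncomputable def Rrep (P : Subgroup G) (x : G) : G :=
  ((QuotientGroup.mk x⁻¹ : G ⧸ P).out)⁻¹

theorem Rrep_mem (P : Subgroup G) (x : G) : x * (Rrep P x)⁻¹ ∈ P := by
  have hm : (x⁻¹)⁻¹ * (QuotientGroup.mk x⁻¹ : G ⧸ P).out ∈ P :=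
    QuotientGroup.eq.mp (QuotientGroup.out_eq' _).symm
  simpa [Rrep, inv_inv] using hm

theorem Rrep_eq (P : Subgroup G) {x y : G} (h : y * x⁻¹ ∈ P) :
    Rrep P x = Rrep P y := by
  have e : (QuotientGroup.mk x⁻¹ : G ⧸ P) = QuotientGroup.mk y⁻¹ :=
    QuotientGroup.eq.mpr (by simpa [mul_inv_rev, inv_inv] using inv_mem h)
  rw [Rrep, Rrep, e]

/-- The element `s·x·Rrep(s·x)⁻¹` of `P`. -/
noncomputable def pElt (P : Subgroup G) (s x : G) : P :=
  ⟨s * x * (Rrep P (s * x))⁻¹, Rrep_mem P (s * x)⟩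

theorem mk_cancel (P : Subgroup G) (a : G) (q : G ⧸ P) :
    (QuotientGroup.mk (a⁻¹ * ((QuotientGroup.mk (a * q.out) : G ⧸ P).out)) : G ⧸ P)
      = q := by
  have hm : (a * q.out)⁻¹ * ((QuotientGroup.mk (a * q.out) : G ⧸ P).out) ∈ P :=
    QuotientGroup.eq.mp (QuotientGroup.out_eq' _).symm
  conv_rhs => rw [← QuotientGroup.out_eq' q]
  refine QuotientGroup.eq.mpr ?_
  have := inv_mem hm
  simpa [mul_inv_rev, inv_inv, mul_assoc] using this

/-- Multiplication by `g⁻¹` on coset representatives, as a permutation of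
`G ⧸ P`. -/
noncomputable def betaQ (P : Subgroup G) (g : G) : (G ⧸ P) ≃ (G ⧸ P) where
  toFun q := QuotientGroup.mk (g⁻¹ * q.out)
  invFun q := QuotientGroup.mk (g * q.out)
  left_inv q := by simpa using mk_cancel P g⁻¹ q
  right_inv q := mk_cancel P g q

noncomputable def rhoRep (P : Subgroup G) (q : G ⧸ P) : G := (q.out)⁻¹

theorem rhoRep_betaQ (P : Subgroup G) (g : G) (q : G ⧸ P) :
    rhoRep P (betaQ P g q) = Rrep P (rhoRep P q * g) := by
  show ((QuotientGroup.mk (g⁻¹ * q.out) : G ⧸ P).out)⁻¹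
      = ((QuotientGroup.mk ((q.out⁻¹ * g)⁻¹) : G ⧸ P).out)⁻¹
  rw [mul_inv_rev, inv_inv]

/-- The summand of the transfer 1-cochain. -/
noncomputable def Tterm (M : GMod G) (P : Subgroup G) (f : G → G → M.carrier)
    (c : P → M.carrier) (s x : G) : M.carrier :=
  s⁻¹ • c (pElt P s x) - f s⁻¹ ↑(pElt P s x) + f x (Rrep P (s * x))⁻¹

theorem per_coset_T (M : GMod G) (P : Subgroup G) (f : G → G → M.carrier)
    (hf : ∀ g h k : G, g • f h k + f g (h * k) = f (g * h) k + f g h)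
    (c : P → M.carrier)
    (hc : ∀ p q : P, f ↑p ↑q = (↑p : G) • c q - c (p * q) + c p)
    (g h s : G) :
    g • Tterm M P f c (Rrep P (s * g)) h - Tterm M P f c s (g * h)
      + Tterm M P f c s g = f g h := by
  have hRs2 : Rrep P (s * (g * h)) = Rrep P (Rrep P (s * g) * h) := by
    refine Rrep_eq P ?_
    have e : Rrep P (s * g) * h * (s * (g * h))⁻¹ = (s * g * (Rrep P (s * g))⁻¹)⁻¹ := by
      group
    rw [e]
    exact inv_mem (Rrep_mem P (s * g))
  have hmid : pElt P s (g * h) = pElt P s g * pElt P (Rrep P (s * g)) h := by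
    apply Subtype.ext
    show s * (g * h) * (Rrep P (s * (g * h)))⁻¹
        = (s * g * (Rrep P (s * g))⁻¹) * (Rrep P (s * g) * h * (Rrep P (Rrep P (s * g) * h))⁻¹)
    rw [hRs2]; group
  have h1 : s * g = ↑(pElt P s g) * Rrep P (s * g) := by
    show s * g = s * g * (Rrep P (s * g))⁻¹ * Rrep P (s * g); group
  have h2 : Rrep P (s * g) * h
      = ↑(pElt P (Rrep P (s * g)) h) * Rrep P (Rrep P (s * g) * h) := by
    show Rrep P (s * g) * h
        = Rrep P (s * g) * h * (Rrep P (Rrep P (s * g) * h))⁻¹ * Rrep P (Rrep P (s * g) * h)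
    group
  simp only [Tterm]
  rw [hRs2, hmid]
  exact per_coset M P f hf c hc g h s (Rrep P (s * g)) (Rrep P (Rrep P (s * g) * h))
    (pElt P s g) (pElt P (Rrep P (s * g)) h) h1 h2

/-- Cochain-level transfer: if the restriction of the 2-cocycle `f` to `P` is
a coboundary, then `[G:P] • f` is a coboundary. -/
theorem transfer [Finite G] (M : GMod G) (P : Subgroup G) (f : G → G → M.carrier)
    (hf : ∀ g h k : G, g • f h k + f g (h * k) = f (g * h) k + f g h)
    (c : P → M.carrier)
    (hc : ∀ p q : P, f ↑p ↑q = (↑p : G) • c q - c (p * q) + c p) :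
    ∃ E : G → M.carrier, ∀ g h : G,
      g • E h - E (g * h) + E g = P.index • f g h := by
  classical
  letI : Fintype (G ⧸ P) := Fintype.ofFinite _
  refine ⟨fun x => ∑ q : G ⧸ P, Tterm M P f c (rhoRep P q) x, ?_⟩
  intro g h
  have reidx : (∑ q : G ⧸ P, g • Tterm M P f c (rhoRep P q) h)
      = ∑ q : G ⧸ P, g • Tterm M P f c (Rrep P (rhoRep P q * g)) h := by
    refine Fintype.sum_equiv (betaQ P g).symm _ _ (fun q => ?_)
    rw [← rhoRep_betaQ P g ((betaQ P g).symm q), Equiv.apply_symm_apply]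
  calc g • (∑ q : G ⧸ P, Tterm M P f c (rhoRep P q) h)
        - (∑ q : G ⧸ P, Tterm M P f c (rhoRep P q) (g * h))
        + (∑ q : G ⧸ P, Tterm M P f c (rhoRep P q) g)
      = ∑ q : G ⧸ P, (g • Tterm M P f c (Rrep P (rhoRep P q * g)) h
          - Tterm M P f c (rhoRep P q) (g * h) + Tterm M P f c (rhoRep P q) g) := by
        rw [Finset.smul_sum, reidx, ← Finset.sum_sub_distrib, ← Finset.sum_add_distrib]
    _ = ∑ _q : G ⧸ P, f g h :=
        Finset.sum_congr rfl fun q _ => per_coset_T M P f hf c hc g h (rhoRep P q)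
    _ = P.index • f g h := by
        rw [Finset.sum_const, Finset.card_univ, Subgroup.index_eq_card,
          Nat.card_eq_fintype_card]

end TransferAux2
section MainAux

open GMod

variable {G : Type u} [Group G]

theorem resH2_comp {H K : Type u} [Group H] [Group K] (M : GMod G)
    (φ : H →* G) (ψ : K →* H) (x : H2 M) :
    resH2 (M.res φ) ψ (resH2 M φ x) = resH2 M (φ.comp ψ) x :=
  QuotientAddGroup.induction_on x fun _ => rfl

end MainAux

/-- If `Ш²_ω(P, M)` vanishes for every Sylow `p`-subgroup `P` of the finite
group `G` (for every prime `p`), then `Ш²_ω(G, M) = 0`. -/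
theorem sha_vanishes_of_sylow (G : Type u) [Group G] [Finite G] (M : GMod G)
    (hfg : Module.Finite ℤ M)
    (h : ∀ (p : ℕ), p.Prime → ∀ P : Sylow p G,
      Sha2omega (M.res (P : Subgroup G).subtype) = ⊥) :
    Sha2omega M = ⊥ := by
  rw [eq_bot_iff]
  intro x hx
  rw [AddSubgroup.mem_bot]
  have hres0 : ∀ g : G, resH2 M (Subgroup.zpowers g).subtype x = 0 := fun g =>
    AddMonoidHom.mem_ker.mp (AddSubgroup.mem_iInf.mp hx g)
  -- the restriction of `x` to each Sylow subgroup lies in `Ш²_ω` there, so vanishes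
  have hSha : ∀ (p : ℕ), p.Prime → ∀ P : Sylow p G,
      resH2 M (P : Subgroup G).subtype x = 0 := by
    intro p hp P
    have hmem : resH2 M (P : Subgroup G).subtype x
        ∈ Sha2omega (M.res (P : Subgroup G).subtype) := by
      refine AddSubgroup.mem_iInf.mpr fun y => ?_
      rw [AddMonoidHom.mem_ker, resH2_comp]
      have hrange : ∀ z : Subgroup.zpowers y,
          ((P : Subgroup G).subtype.comp (Subgroup.zpowers y).subtype) z
            ∈ Subgroup.zpowers (y : G) := by
        intro z
        obtain ⟨k, hk⟩ := Subgroup.mem_zpowers_iff.mp z.2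
        refine Subgroup.mem_zpowers_iff.mpr ⟨k, ?_⟩
        show (↑y : G) ^ k = ((z : ↥(P : Subgroup G)) : G)
        rw [← hk]
        norm_cast
      have hfac : (P : Subgroup G).subtype.comp (Subgroup.zpowers y).subtype
          = ((Subgroup.zpowers (y : G)).subtype).comp
              (((P : Subgroup G).subtype.comp
                (Subgroup.zpowers y).subtype).codRestrict _ hrange) := by
        ext z; rfl
      show resH2 M (((Subgroup.zpowers (y : G)).subtype).comp
          (((P : Subgroup G).subtype.comp
            (Subgroup.zpowers y).subtype).codRestrict _ hrange)) x = 0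
      rw [← resH2_comp, hres0 ↑y]
      exact map_zero _
    rw [h p hp P] at hmem
    exact AddSubgroup.mem_bot.mp hmem
  -- transfer: the index of each Sylow subgroup kills `x`
  have hkill : ∀ (p : ℕ), p.Prime → ∀ P : Sylow p G,
      (P : Subgroup G).index • x = 0 := by
    intro p hp P
    obtain ⟨f, rfl⟩ := QuotientAddGroup.mk'_surjective _ x
    have h0 := hSha p hp P
    rw [show resH2 M (P : Subgroup G).subtype ((QuotientAddGroup.mk' _) f)
        = (QuotientAddGroup.mk' _) (resTwoCocycles M (P : Subgroup G).subtype f)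
      from rfl] at h0
    change (QuotientAddGroup.mk (resTwoCocycles M (P : Subgroup G).subtype f)
        : twoCocycles (M.res (P : Subgroup G).subtype) ⧸ _) = 0 at h0
    rw [QuotientAddGroup.eq_zero_iff, AddSubgroup.mem_addSubgroupOf] at h0
    obtain ⟨cc, hcc⟩ := h0
    obtain ⟨E, hE⟩ := transfer M (P : Subgroup G) f.1 f.2 cc
      (fun a b => (congrFun (congrFun hcc a) b).symm)
    have hmem2 : ((P : Subgroup G).index • f : twoCocycles M)
        ∈ ((dOne M).range.addSubgroupOf (twoCocycles M)) := by
      rw [AddSubgroup.mem_addSubgroupOf]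
      refine ⟨E, ?_⟩
      funext g h'
      show g • E h' - E (g * h') + E g = _
      rw [hE g h']
      show (P : Subgroup G).index • f.1 g h'
          = (((P : Subgroup G).index • f : twoCocycles M) : G → G → M.carrier) g h'
      norm_cast
    calc (P : Subgroup G).index • (QuotientAddGroup.mk' _) f
        = (QuotientAddGroup.mk' _) ((P : Subgroup G).index • f) :=
          (map_nsmul _ _ _).symm
      _ = 0 := (QuotientAddGroup.eq_zero_iff _).mpr hmem2
  -- conclude by coprimality of the Sylow indices
  have hord : addOrderOf x = 1 := by
    by_contra hne1
    have hp := Nat.minFac_prime hne1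
    haveI : Fact ((addOrderOf x).minFac).Prime := ⟨hp⟩
    obtain ⟨P⟩ : Nonempty (Sylow ((addOrderOf x).minFac) G) := inferInstance
    have hdvd : addOrderOf x ∣ (P : Subgroup G).index :=
      addOrderOf_dvd_of_nsmul_eq_zero (hkill _ hp P)
    haveI : (P : Subgroup G).FiniteIndex := ⟨Subgroup.index_ne_zero_of_finite⟩
    exact P.not_dvd_index ((Nat.minFac_dvd _).trans hdvd)
  exact AddMonoid.addOrderOf_eq_one_iff.mp hord
end

section
/- Let G be a finite group, M a G-lattice, and 0 → M → S → N → 0 a flasque resolution of M (S a permutation module, N flasque). Then Sha²_ω(G, M) is isomorphic to the group cohomology H¹(G, N). -/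
/-! Preliminaries: a lightweight theory of `G`-modules (abelian groups with a
distributive `G`-action, i.e. `ℤ[G]`-modules), lattices, permutation modules,
flasque modules and flasque resolutions, the norm-one-torus character lattice
`Mn n` over the symmetric group `S_n`, and low-degree group cohomology with
the invariant `Ш²_ω`. -/

open Equiv

universe u

open GMod

section RawAux
universe v w
variable {G : Type u} [Group G] {X : Type v} {A : Type w} [AddCommGroup A]

/-- Orbit setoid for an action `φ`. -/
def orbSetoid (φ : G →* Equiv.Perm X) : Setoid X where
  r x y := ∃ g : G, φ g x = y
  iseqv := by
    refine ⟨fun x => ⟨1, by simp⟩, ?_, ?_⟩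
    · rintro x y ⟨g, rfl⟩; exact ⟨g⁻¹, by simp⟩
    · rintro x y z ⟨g, rfl⟩ ⟨g', rfl⟩; exact ⟨g' * g, by simp [Equiv.Perm.mul_apply]⟩

/-- Raw coboundary criterion: a 1-cocycle with values in a coefficient
permutation module is a coboundary iff it vanishes at fixed points. -/
theorem raw_coboundary_of_fixed (φ : G →* Equiv.Perm X) (c : G → X → A)
    (hc : ∀ g h : G, c (g * h) = (fun x => c h ((φ g)⁻¹ x)) + c g)
    (hfix : ∀ (g : G) (x : X), φ g x = x → c g x = 0) :
    ∃ m : X → A, ∀ g : G, c g = (fun x => m ((φ g)⁻¹ x)) - m := by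
  classical
  letI s := orbSetoid φ
  -- representative of the orbit of x
  set R : X → X := fun x => (Quotient.mk s x).out with hR
  have hrel : ∀ x : X, ∃ g : G, φ g (R x) = x := by
    intro x
    have : s.r (R x) x := Quotient.exact (Quotient.out_eq (Quotient.mk s x))
    exact this
  choose τ hτ using hrel
  -- well-definedness: if g, g' both carry R x to x then c g x = c g' x
  have hwd : ∀ (x : X) (g g' : G), φ g (R x) = x → φ g' (R x) = x →
      c g x = c g' x := by
    intro x g g' hg hg'
    have h2 : (φ g)⁻¹ x = R x := by
      rw [Equiv.Perm.inv_def, Equiv.symm_apply_eq]; exact hg.symm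
    have hfix' : φ (g⁻¹ * g') (R x) = R x := by
      rw [map_mul, Equiv.Perm.mul_apply, hg', map_inv]; exact h2
    have h1 : c (g * (g⁻¹ * g')) x = c (g⁻¹ * g') ((φ g)⁻¹ x) + c g x :=
      congrFun (hc g (g⁻¹ * g')) x
    rw [h2, hfix _ _ hfix'] at h1
    simpa using h1.symm
  refine ⟨fun x => - c (τ x) x, ?_⟩
  intro g; funext x
  set y := (φ g)⁻¹ x with hy
  have hRxy : R y = R x := by
    have : (Quotient.mk s y) = (Quotient.mk s x) := Quotient.sound ⟨g, by simp [hy]⟩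
    simp [hR, this]
  have hgy : φ (g * τ y) (R x) = x := by
    rw [map_mul, Equiv.Perm.mul_apply, ← hRxy, hτ y]
    simp [hy]
  have h1 : c (g * τ y) x = c (τ y) ((φ g)⁻¹ x) + c g x := congrFun (hc g (τ y)) x
  have h2 : c (g * τ y) x = c (τ x) x := hwd x _ _ hgy (hτ x)
  have : c (τ x) x = c (τ y) y + c g x := by rw [← h1, h2]
  show c g x = -c (τ ((φ g)⁻¹ x)) ((φ g)⁻¹ x) - -c (τ x) x
  rw [← hy, this]
  abel

theorem raw_cocycle_one (φ : G →* Equiv.Perm X) (c : G → X → A)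
    (hc : ∀ g h : G, c (g * h) = (fun x => c h ((φ g)⁻¹ x)) + c g) :
    c (1 : G) = 0 := by
  funext x
  have h := congrFun (hc 1 1) x
  simp only [mul_one, map_one, inv_one, Equiv.Perm.coe_one, id_eq, Pi.add_apply] at h
  -- h : c 1 x = c 1 x + c 1 x
  have : c 1 x = c 1 x + c 1 x := h
  simpa using (add_left_cancel (a := c (1:G) x) (by rw [← this, add_zero])).symm

theorem raw_pow_fixed (φ : G →* Equiv.Perm X) (c : G → X → A)
    (hc : ∀ g h : G, c (g * h) = (fun x => c h ((φ g)⁻¹ x)) + c g)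
    {g : G} {x : X} (hx : φ g x = x) (k : ℕ) :
    c (g ^ k) x = k • c g x := by
  induction k with
  | zero => simp [raw_cocycle_one φ c hc]
  | succ k ih =>
    have hfixk : φ (g ^ k) x = x := by
      rw [map_pow, ← Equiv.Perm.iterate_eq_pow]
      exact Function.iterate_fixed hx k
    have hinv : (φ (g ^ k))⁻¹ x = x := by
      rw [Equiv.Perm.inv_def, Equiv.symm_apply_eq]; exact hfixk.symm
    have h := congrFun (hc (g ^ k) g) x
    rw [← pow_succ] at h
    rw [h]
    simp only [Pi.add_apply, hinv, ih]
    rw [succ_nsmul]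
    abel

/-- `H¹` of a coefficient permutation module vanishes when `G` is finite and
the coefficients are torsion-free. -/
theorem raw_H1_vanish [Finite G] (φ : G →* Equiv.Perm X) (c : G → X → A)
    (htf : ∀ (n : ℕ) (a : A), 0 < n → n • a = 0 → a = 0)
    (hc : ∀ g h : G, c (g * h) = (fun x => c h ((φ g)⁻¹ x)) + c g) :
    ∃ m : X → A, ∀ g : G, c g = (fun x => m ((φ g)⁻¹ x)) - m := by
  refine raw_coboundary_of_fixed φ c hc ?_
  intro g x hx
  refine htf (orderOf g) _ (orderOf_pos g) ?_
  rw [← raw_pow_fixed φ c hc hx, pow_orderOf_eq_one, raw_cocycle_one φ c hc]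
  rfl

theorem raw_H2_vanish_rat [Finite G] (φ : G →* Equiv.Perm X) (F : G → G → X → ℚ)
    (hF : ∀ g h k : G, (fun x => F h k ((φ g)⁻¹ x)) + F g (h * k) = F (g * h) k + F g h) :
    ∃ t : G → X → ℚ, ∀ g h : G, F g h = (fun x => t h ((φ g)⁻¹ x)) - t (g * h) + t g := by
  classical
  have : Fintype G := Fintype.ofFinite G
  set n : ℚ := (Fintype.card G : ℚ) with hn
  have hn0 : n ≠ 0 := by
    simp [hn, Fintype.card_ne_zero]
  set T : G → X → ℚ := fun g x => ∑ k : G, F g k x with hT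
  refine ⟨fun g x => n⁻¹ * T g x, ?_⟩
  intro g h
  funext x
  have key : T h ((φ g)⁻¹ x) + T g x = T (g * h) x + n * F g h x := by
    have hsum : ∑ k : G, (F h k ((φ g)⁻¹ x) + F g (h * k) x)
        = ∑ k : G, (F (g * h) k x + F g h x) := by
      refine Finset.sum_congr rfl fun k _ => ?_
      exact congrFun (hF g h k) x
    rw [Finset.sum_add_distrib, Finset.sum_add_distrib] at hsum
    have hre : ∑ k : G, F g (h * k) x = T g x := by
      exact Fintype.sum_equiv (Equiv.mulLeft h) _ _ fun k => rfl
    rw [hre] at hsum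
    simpa [hT, hn, Finset.sum_const, nsmul_eq_mul, mul_comm] using hsum
  show F g h x = n⁻¹ * T h ((φ g)⁻¹ x) - n⁻¹ * T (g * h) x + n⁻¹ * T g x
  have key2 : n * F g h x = T h ((φ g)⁻¹ x) - T (g * h) x + T g x := by linarith [key]
  calc F g h x = n⁻¹ * (n * F g h x) := by
        rw [← mul_assoc, inv_mul_cancel₀ hn0, one_mul]
    _ = n⁻¹ * (T h ((φ g)⁻¹ x) - T (g * h) x + T g x) := by rw [key2]
    _ = _ := by ring

theorem raw_sha2_vanish [Finite G] (φ : G →* Equiv.Perm X) (F : G → G → X → ℤ)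
    (hF : ∀ g h k : G, (fun x => F h k ((φ g)⁻¹ x)) + F g (h * k) = F (g * h) k + F g h)
    (hres : ∀ g : G, ∃ u : Subgroup.zpowers g → X → ℤ,
      ∀ a b : Subgroup.zpowers g,
        F (a : G) (b : G) = (fun x => u b ((φ (a : G))⁻¹ x)) - u (a * b) + u a) :
    ∃ t : G → X → ℤ, ∀ g h : G, F g h = (fun x => t h ((φ g)⁻¹ x)) - t (g * h) + t g := by
  classical
  -- Step 1: solve over ℚ
  set Fq : G → G → X → ℚ := fun g h x => ((F g h x : ℤ) : ℚ) with hFq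
  have hFqc : ∀ g h k : G, (fun x => Fq h k ((φ g)⁻¹ x)) + Fq g (h * k)
      = Fq (g * h) k + Fq g h := by
    intro g h k; funext x
    have := congrFun (hF g h k) x
    simp only [Pi.add_apply] at this ⊢
    simp only [hFq]
    exact_mod_cast this
  obtain ⟨q, hq⟩ := raw_H2_vanish_rat φ Fq hFqc
  have hq' : ∀ (g h : G) (x : X),
      Fq g h x = q h ((φ g)⁻¹ x) - q (g * h) x + q g x := by
    intro g h x
    have := congrFun (hq g h) x
    simpa using this
  -- Step 2: the class mod ℤ
  set Z1 : AddSubgroup ℚ := AddSubgroup.zmultiples (1 : ℚ) with hZ1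
  have hintmem : ∀ k : ℤ, ((k : ℚ)) ∈ Z1 := fun k => ⟨k, by simp⟩
  set π : ℚ →+ ℚ ⧸ Z1 := QuotientAddGroup.mk' Z1 with hπ
  set cbar : G → X → ℚ ⧸ Z1 := fun g x => π (q g x) with hcbar
  have hcbarc : ∀ g h : G, cbar (g * h) = (fun x => cbar h ((φ g)⁻¹ x)) + cbar g := by
    intro g h; funext x
    show π (q (g * h) x) = π (q h ((φ g)⁻¹ x)) + π (q g x)
    rw [← map_add]
    have : q (g * h) x - (q h ((φ g)⁻¹ x) + q g x) = -Fq g h x := by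
      have := hq' g h x; linarith
    have hmem : q (g * h) x - (q h ((φ g)⁻¹ x) + q g x) ∈ Z1 := by
      rw [this]
      simpa [hFq] using (Z1.neg_mem (hintmem (F g h x)))
    have h0 : π (q (g * h) x - (q h ((φ g)⁻¹ x) + q g x)) = 0 :=
      (QuotientAddGroup.eq_zero_iff _).mpr hmem
    rw [map_sub, map_add] at h0
    have := sub_eq_zero.mp h0
    rw [this, map_add]
  -- Step 3: fixed-point vanishing of the class mod ℤ
  have hfix : ∀ (g : G) (x : X), φ g x = x → cbar g x = 0 := by
    intro g x hx
    set H := Subgroup.zpowers g with hH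
    set φH : ↥H →* Equiv.Perm X := φ.comp H.subtype with hφH
    obtain ⟨u, hu⟩ := hres g
    set w : ↥H → X → ℚ := fun a y => q (a : G) y - ((u a y : ℤ) : ℚ) with hw
    have hwc : ∀ a b : ↥H, w (a * b) = (fun y => w b ((φH a)⁻¹ y)) + w a := by
      intro a b; funext y
      have h1 := hq' (a : G) (b : G) y
      have h2 := congrFun (hu a b) y
      simp only [Pi.sub_apply, Pi.add_apply] at h2
      have h2' : Fq (a : G) (b : G) y
          = ((u b ((φ (a : G))⁻¹ y) : ℤ) : ℚ) - ((u (a * b) y : ℤ) : ℚ)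
            + ((u a y : ℤ) : ℚ) := by
        have : ((a : G) * (b : G)) = ((a * b : ↥H) : G) := rfl
        simp only [hFq]
        rw [show F (a:G) (b:G) y = u b ((φ (a:G))⁻¹ y) - u (a*b) y + u a y from by
          simpa using h2]
        push_cast; ring
      have hmul : ((a * b : ↥H) : G) = (a : G) * (b : G) := rfl
      show q ((a * b : ↥H) : G) y - ((u (a * b) y : ℤ) : ℚ)
          = (q (b : G) ((φ (a : G))⁻¹ y) - ((u b ((φ (a : G))⁻¹ y) : ℤ) : ℚ))
            + (q (a : G) y - ((u a y : ℤ) : ℚ))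
      rw [hmul]
      rw [h2'] at h1
      linarith
    set gh : ↥H := ⟨g, Subgroup.mem_zpowers g⟩ with hgh
    have hfixH : φH gh x = x := hx
    have hpow := raw_pow_fixed φH w hwc hfixH (orderOf gh)
    rw [pow_orderOf_eq_one, raw_cocycle_one φH w hwc] at hpow
    have hn0 : orderOf gh ≠ 0 := (orderOf_pos gh).ne'
    have hw0 : w gh x = 0 := by
      have : (0 : ℚ) = (orderOf gh : ℚ) * w gh x := by
        rw [← nsmul_eq_mul]; exact hpow
      have := this.symm
      rcases mul_eq_zero.mp this with h | h
      · exact absurd (Nat.cast_eq_zero.mp h) hn0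
      · exact h
    have hq'' : q g x = ((u gh x : ℤ) : ℚ) := by
      have : q (gh : G) x - ((u gh x : ℤ) : ℚ) = 0 := hw0
      have h2 : (gh : G) = g := rfl
      rw [h2] at this
      linarith
    show π (q g x) = 0
    rw [hq'']
    exact (QuotientAddGroup.eq_zero_iff _).mpr (hintmem _)
  -- Step 4: conclude that `cbar` is a coboundary
  obtain ⟨mbar, hmbar⟩ := raw_coboundary_of_fixed φ cbar hcbarc hfix
  -- Step 5: lift `mbar` to ℚ
  have hlift : ∀ x : X, ∃ r : ℚ, π r = mbar x := fun x =>
    ⟨(mbar x).out, QuotientAddGroup.out_eq' (mbar x)⟩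
  choose m hm using hlift
  -- Step 6: the corrected rational solution is integral
  set r : G → X → ℚ := fun g x => q g x - (m ((φ g)⁻¹ x) - m x) with hr
  have hrint : ∀ (g : G) (x : X), ∃ k : ℤ, (k : ℚ) = r g x := by
    intro g x
    have h1 : π (r g x) = 0 := by
      have h2 := congrFun (hmbar g) x
      simp only [Pi.sub_apply] at h2
      show π (q g x - (m ((φ g)⁻¹ x) - m x)) = 0
      rw [map_sub, map_sub, hm, hm]
      show cbar g x - (mbar ((φ g)⁻¹ x) - mbar x) = 0
      rw [h2]; abel
    rcases (QuotientAddGroup.eq_zero_iff _).mp h1 with ⟨k, hk⟩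
    exact ⟨k, by simpa using hk⟩
  choose t ht using fun g => fun x => hrint g x
  refine ⟨t, ?_⟩
  intro g h
  funext x
  have hmix : (φ (g * h))⁻¹ x = (φ h)⁻¹ ((φ g)⁻¹ x) := by
    rw [map_mul, mul_inv_rev, Equiv.Perm.mul_apply]
  have hrid : r h ((φ g)⁻¹ x) - r (g * h) x + r g x = Fq g h x := by
    have := hq' g h x
    simp only [hr, hmix]
    linarith
  have : ((F g h x : ℤ) : ℚ)
      = ((t h ((φ g)⁻¹ x) - t (g * h) x + t g x : ℤ) : ℚ) := by
    push_cast
    rw [ht h ((φ g)⁻¹ x), ht (g * h) x, ht g x]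
    rw [hrid]
  have hfin := Int.cast_injective (α := ℚ) this
  show F g h x = t h ((φ g)⁻¹ x) - t (g * h) x + t g x
  simpa using hfin

end RawAux

section Bridge
variable {G : Type u} [Group G]

theorem perm_basis_equiv {S : GMod G} (hS : S.IsPermutation) :
    ∃ (ι : Type u) (fperm : G →* Equiv.Perm ι) (E : S.carrier ≃+ (ι → ℤ)),
      ∀ (g : G) (s : S.carrier) (x : ι), E (g • s) x = E s ((fperm g)⁻¹ x) := by
  classical
  obtain ⟨ι, hfin, b, f, hb⟩ := hS
  haveI := hfin
  refine ⟨ι, f, (b.repr.trans (Finsupp.linearEquivFunOnFinite ℤ ℤ ι)).toAddEquiv, ?_⟩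
  intro g s x
  show (b.repr (g • s)) x = (b.repr s) ((f g)⁻¹ x)
  -- prove by ℤ-linear span induction on `s`
  set T : Submodule ℤ S.carrier :=
    { carrier := {s | ∀ x, b.repr (g • s) x = b.repr s ((f g)⁻¹ x)}
      add_mem' := by
        intro a c ha hc x
        rw [smul_add, map_add, map_add]
        rw [Finsupp.add_apply, Finsupp.add_apply, ha x, hc x]
      zero_mem' := by intro x; rw [smul_zero]; simp
      smul_mem' := by
        intro k a ha x
        have hcomm : g • (k • a) = k • (g • a) :=
          AddMonoidHom.map_zsmul (DistribMulAction.toAddMonoidHom S.carrier g) k a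
        rw [hcomm]
        rw [show b.repr (k • (g • a)) = k • b.repr (g • a) from map_smul _ k _]
        rw [show b.repr (k • a) = k • b.repr a from map_smul _ k _]
        rw [Finsupp.smul_apply, Finsupp.smul_apply, ha x] } with hT
  have hsub : Set.range b ⊆ (T : Set S.carrier) := by
    rintro _ ⟨j, rfl⟩ y
    rw [hb g j, b.repr_self, b.repr_self]
    rw [Finsupp.single_apply, Finsupp.single_apply]
    by_cases hcase : f g j = y
    · rw [if_pos hcase, if_pos]
      rw [Equiv.Perm.inv_def, Equiv.eq_symm_apply]
      exact hcase
    · rw [if_neg hcase, if_neg]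
      intro hj
      exact hcase (by rw [hj]; simp)
  have htop : (⊤ : Submodule ℤ S.carrier) ≤ T := by
    rw [← b.span_eq]
    exact Submodule.span_le.mpr hsub
  exact htop (Submodule.mem_top) x

theorem int_torsionfree : ∀ (n : ℕ) (a : ℤ), 0 < n → n • a = 0 → a = 0 := by
  intro n a hn ha
  rw [nsmul_eq_mul] at ha
  rcases mul_eq_zero.mp ha with h | h
  · exact absurd (by exact_mod_cast h) hn.ne'
  · exact h

theorem perm_H1_vanish [Finite G] {S : GMod G} (hS : S.IsPermutation)
    (w : G → S.carrier) (hw : ∀ g h : G, w (g * h) = g • w h + w g) :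
    ∃ s₀ : S.carrier, ∀ g : G, w g = g • s₀ - s₀ := by
  obtain ⟨ι, fperm, E, hE⟩ := perm_basis_equiv hS
  set c : G → ι → ℤ := fun g => E (w g) with hc
  have hcc : ∀ g h : G, c (g * h) = (fun x => c h ((fperm g)⁻¹ x)) + c g := by
    intro g h; funext x
    show E (w (g * h)) x = E (w h) ((fperm g)⁻¹ x) + E (w g) x
    rw [hw g h, map_add]
    show E (g • w h) x + E (w g) x = _
    rw [hE g (w h) x]
  obtain ⟨m, hm⟩ := raw_H1_vanish fperm c int_torsionfree hcc
  refine ⟨E.symm m, fun g => ?_⟩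
  apply E.injective
  have h1 : E (w g) = (fun x => m ((fperm g)⁻¹ x)) - m := hm g
  rw [h1, map_sub]
  funext x
  rw [Pi.sub_apply, Pi.sub_apply, hE g (E.symm m) x]
  simp

theorem perm_sha2_vanish [Finite G] {S : GMod G} (hS : S.IsPermutation)
    (f : G → G → S.carrier)
    (hf : ∀ g h k : G, g • f h k + f g (h * k) = f (g * h) k + f g h)
    (hres : ∀ g : G, ∃ u : ↥(Subgroup.zpowers g) → S.carrier,
      ∀ a b : ↥(Subgroup.zpowers g),
        f (a : G) (b : G) = (a : G) • u b - u (a * b) + u a) :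
    ∃ t : G → S.carrier, ∀ g h : G, f g h = g • t h - t (g * h) + t g := by
  obtain ⟨ι, fperm, E, hE⟩ := perm_basis_equiv hS
  have hEsymm : ∀ (g : G) (v : ι → ℤ),
      E.symm (fun x => v ((fperm g)⁻¹ x)) = g • E.symm v := by
    intro g v
    apply E.injective
    funext x
    rw [hE g (E.symm v) x]
    simp
  set F : G → G → ι → ℤ := fun g h => E (f g h) with hF
  have hFc : ∀ g h k : G,
      (fun x => F h k ((fperm g)⁻¹ x)) + F g (h * k) = F (g * h) k + F g h := by
    intro g h k; funext x
    have h2 : E (g • f h k) + E (f g (h * k)) = E (f (g * h) k) + E (f g h) := by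
      rw [← map_add, ← map_add, hf g h k]
    have h3 := congrFun h2 x
    simp only [Pi.add_apply] at h3
    show E (f h k) ((fperm g)⁻¹ x) + E (f g (h * k)) x
        = E (f (g * h) k) x + E (f g h) x
    rw [← hE g (f h k) x]
    exact h3
  have hFres : ∀ g : G, ∃ u' : ↥(Subgroup.zpowers g) → ι → ℤ,
      ∀ a b : ↥(Subgroup.zpowers g),
        F (a : G) (b : G) = (fun x => u' b ((fperm (a : G))⁻¹ x)) - u' (a * b) + u' a := by
    intro g
    obtain ⟨u, hu⟩ := hres g
    refine ⟨fun a => E (u a), fun a b => ?_⟩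
    funext x
    have h2 : E (f (a : G) (b : G)) = E ((a : G) • u b) - E (u (a * b)) + E (u a) := by
      rw [hu a b, map_add, map_sub]
    have h3 := congrFun h2 x
    simp only [Pi.add_apply, Pi.sub_apply] at h3
    show E (f (a : G) (b : G)) x
        = E (u b) ((fperm (a : G))⁻¹ x) - E (u (a * b)) x + E (u a) x
    rw [← hE (a : G) (u b) x]
    exact h3
  obtain ⟨t', ht'⟩ := raw_sha2_vanish fperm F hFc hFres
  refine ⟨fun g => E.symm (t' g), fun g h => ?_⟩
  have h1 := congrArg E.symm (ht' g h)
  rw [E.symm_apply_apply] at h1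
  rw [h1, map_add, map_sub, hEsymm g (t' h)]

theorem flasque_cyclic_coboundary [Finite G] {N : GMod G} (hN : N.IsFlasque)
    (c : G → N.carrier) (hc : ∀ g h : G, c (g * h) = g • c h + c g) (g : G) :
    ∃ y : N.carrier, ∀ a : ↥(Subgroup.zpowers g), c (a : G) = (a : G) • y - y := by
  classical
  have hc1 : c 1 = 0 := by
    have := hc 1 1
    rw [mul_one, one_smul] at this
    exact left_eq_add.mp this
  have hpow : ∀ k : ℕ, c (g ^ k) = ∑ j ∈ Finset.range k, g ^ j • c g := by
    intro k
    induction k with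
    | zero => simpa using hc1
    | succ k ih =>
      rw [pow_succ, hc (g ^ k) g, Finset.sum_range_succ, ih, add_comm]
  set n := orderOf g with hn
  have hnorm : (∑ a ∈ (Set.toFinite ((Subgroup.zpowers g : Subgroup G) : Set G)).toFinset,
      a • c g) = 0 := by
    have hsum : (∑ a ∈ (Set.toFinite ((Subgroup.zpowers g : Subgroup G) : Set G)).toFinset,
        a • c g) = ∑ j ∈ Finset.range n, g ^ j • c g := by
      refine (Finset.sum_bij (fun j hj => g ^ j) ?_ ?_ ?_ ?_).symm
      · intro j hj
        exact (Set.Finite.mem_toFinset _).mpr ⟨(j : ℤ), zpow_natCast g j⟩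
      · intro j hj j' hj' hjj
        exact pow_injOn_Iio_orderOf (Finset.mem_range.mp hj) (Finset.mem_range.mp hj') hjj
      · intro a ha
        have ha' : a ∈ Subgroup.zpowers g := (Set.Finite.mem_toFinset _).mp ha
        rw [mem_zpowers_iff_mem_range_orderOf] at ha'
        rcases Finset.mem_image.mp ha' with ⟨j, hj, rfl⟩
        exact ⟨j, hj, rfl⟩
      · intro j hj; rfl
    rw [hsum, ← hpow n, hn, pow_orderOf_eq_one, hc1]
  have hclos := hN (Subgroup.zpowers g) (c g) hnorm
  -- the subgroup of elements of the form `g • y - y`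
  set D : AddSubgroup N.carrier :=
    { carrier := {z | ∃ y : N.carrier, z = g • y - y}
      add_mem' := by
        rintro _ _ ⟨y, rfl⟩ ⟨y', rfl⟩
        exact ⟨y + y', by rw [smul_add]; abel⟩
      zero_mem' := ⟨0, by rw [smul_zero]; abel⟩
      neg_mem' := by
        rintro _ ⟨y, rfl⟩
        exact ⟨-y, by rw [smul_neg]; abel⟩ } with hD
  have hDzpow : ∀ (k : ℤ) (y : N.carrier), g ^ k • y - y ∈ D := by
    intro k
    induction k using Int.induction_on with
    | zero => intro y; simpa using D.zero_mem
    | succ k ih =>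
      intro y
      have h1 : g ^ ((k : ℤ) + 1) • y - y = (g • (g ^ (k : ℤ) • y) - g ^ (k : ℤ) • y)
          + (g ^ (k : ℤ) • y - y) := by
        rw [show (g : G) ^ ((k : ℤ) + 1) = g * g ^ (k : ℤ) from by
          rw [add_comm, zpow_add, zpow_one], mul_smul]
        abel
      rw [h1]
      exact D.add_mem ⟨g ^ (k : ℤ) • y, rfl⟩ (ih y)
    | pred k ih =>
      intro y
      have h1 : g ^ (-(k : ℤ) - 1) • y - y
          = (g ^ (-(k : ℤ)) • (g⁻¹ • y) - g⁻¹ • y) - (g • (g⁻¹ • y) - g⁻¹ • y) := by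
        rw [zpow_sub_one, mul_smul, smul_inv_smul]
        abel
      rw [h1]
      exact D.sub_mem (ih (g⁻¹ • y)) ⟨g⁻¹ • y, rfl⟩
  have hcgD : c g ∈ D := by
    refine (AddSubgroup.closure_le D).mpr ?_ hclos
    rintro z ⟨g', hg', y, rfl⟩
    rcases Subgroup.mem_zpowers_iff.mp hg' with ⟨k, rfl⟩
    exact hDzpow k y
  obtain ⟨y₀, hy₀⟩ := hcgD
  have claim : ∀ k : ℤ, c (g ^ k) = g ^ k • y₀ - y₀ := by
    intro k
    induction k using Int.induction_on with
    | zero => rw [zpow_zero, one_smul, sub_self]; exact hc1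
    | succ k ih =>
      rw [show (g : G) ^ ((k : ℤ) + 1) = g ^ (k : ℤ) * g from by rw [zpow_add_one]]
      rw [hc (g ^ (k : ℤ)) g, ih, hy₀, smul_sub, ← mul_smul]
      abel
    | pred k ih =>
      have hmul : g ^ (-(k : ℤ) - 1) * g = g ^ (-(k : ℤ)) := by
        rw [zpow_sub_one, inv_mul_cancel_right]
      have h2 := hc (g ^ (-(k : ℤ) - 1)) g
      rw [hmul, ih, hy₀] at h2
      have h3 : c (g ^ (-(k : ℤ) - 1))
          = (g ^ (-(k : ℤ)) • y₀ - y₀) - g ^ (-(k : ℤ) - 1) • (g • y₀ - y₀) := by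
        rw [h2]; abel
      rw [h3, smul_sub, ← mul_smul, hmul]
      abel
  refine ⟨y₀, fun a => ?_⟩
  rcases Subgroup.mem_zpowers_iff.mp a.2 with ⟨k, hk⟩
  rw [← hk]
  exact claim k

end Bridge


/-- For a flasque resolution `0 → M → S → N → 0` of `G`-lattices,
`Ш²_ω(G, M) ≅ H¹(G, N)`. -/
theorem sha_iso_H1_of_flasqueResolution (G : Type u) [Group G] [Finite G]
    (M S N : GMod G) (h : IsFlasqueResolution M S N) :
    Nonempty (↥(Sha2omega M) ≃+ H1 N) := by
  classical
  obtain ⟨hMlat, hSlat, hNlat, hSperm, hNfl, i, p, hieq, hpeq, hiinj, hpsurj, hrange⟩ := h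
  -- a ℤ-linear section of `p`, using freeness of `N`
  haveI := hNlat.1
  set bN := Module.Free.chooseBasis ℤ N.carrier with hbN
  have hpre : ∀ x, ∃ s, p s = bN x := fun x => hpsurj (bN x)
  choose sb hsb using hpre
  set σlin : N.carrier →ₗ[ℤ] S.carrier := bN.constr ℤ sb with hσlin
  set σ : N.carrier →+ S.carrier := σlin.toAddMonoidHom with hσdef
  have hσ : ∀ nn : N.carrier, p (σ nn) = nn := by
    have hcomp : (p.toIntLinearMap.comp σlin) = LinearMap.id := by
      refine bN.ext fun x => ?_
      simp only [LinearMap.comp_apply, hσlin, Module.Basis.constr_basis, LinearMap.id_apply]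
      exact hsb x
    intro nn
    exact congrArg (fun (L : N.carrier →ₗ[ℤ] N.carrier) => L nn) hcomp
  -- a partial inverse of `i`
  set j : S.carrier → M.carrier := Function.invFun i with hjdef
  have hji : ∀ m : M.carrier, j (i m) = m := fun m =>
    Function.leftInverse_invFun hiinj m
  have hij : ∀ s : S.carrier, p s = 0 → i (j s) = s := by
    intro s hs
    have hmem : s ∈ i.range := by
      rw [hrange]; exact hs
    rcases hmem with ⟨m, rfl⟩
    rw [hji]
  have hjadd : ∀ s s' : S.carrier, p s = 0 → p s' = 0 → j (s + s') = j s + j s' := by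
    intro s s' hs hs'
    apply hiinj
    rw [map_add, hij _ hs, hij _ hs', hij]
    rw [map_add, hs, hs', add_zero]
  -- the connecting 2-cochain in `S`
  set Fc : (G → N.carrier) → G → G → S.carrier :=
    fun c g h' => g • σ (c h') - σ (c (g * h')) + σ (c g) with hFcdef
  have hpFc : ∀ (c : ↥(oneCocycles N)) (g h' : G), p (Fc c.1 g h') = 0 := by
    intro c g h'
    have hcoc : ∀ g h : G, c.1 (g * h) = g • c.1 h + c.1 g := c.2
    show p (g • σ (c.1 h') - σ (c.1 (g * h')) + σ (c.1 g)) = 0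
    rw [map_add, map_sub, hpeq, hσ, hσ, hσ, hcoc g h']
    abel
  set Φ0 : (G → N.carrier) → G → G → M.carrier := fun c g h' => j (Fc c g h') with hΦ0def
  have hiΦ0 : ∀ (c : ↥(oneCocycles N)) (g h' : G), i (Φ0 c.1 g h') = Fc c.1 g h' :=
    fun c g h' => hij _ (hpFc c g h')
  have hFcid : ∀ (c : G → N.carrier) (g h k : G),
      g • Fc c h k + Fc c g (h * k) = Fc c (g * h) k + Fc c g h := by
    intro c g h k
    show g • (h • σ (c k) - σ (c (h * k)) + σ (c h))
        + (g • σ (c (h * k)) - σ (c (g * (h * k))) + σ (c g))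
      = ((g * h) • σ (c k) - σ (c (g * h * k)) + σ (c (g * h)))
        + (g • σ (c h) - σ (c (g * h)) + σ (c g))
    simp only [smul_sub, smul_add, mul_smul, mul_assoc]
    abel
  have hmemΦ : ∀ c : ↥(oneCocycles N), Φ0 c.1 ∈ twoCocycles M := by
    intro c g h k
    apply hiinj
    have h1 : i (g • Φ0 c.1 h k + Φ0 c.1 g (h * k)) = g • Fc c.1 h k + Fc c.1 g (h * k) := by
      rw [map_add, hieq, hiΦ0, hiΦ0]
    have h2 : i (Φ0 c.1 (g * h) k + Φ0 c.1 g h) = Fc c.1 (g * h) k + Fc c.1 g h := by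
      rw [map_add, hiΦ0, hiΦ0]
    rw [h1, h2]
    exact hFcid c.1 g h k
  set Φ : ↥(oneCocycles N) →+ ↥(twoCocycles M) :=
    AddMonoidHom.mk' (fun c => ⟨Φ0 c.1, hmemΦ c⟩) (by
      intro a b
      apply Subtype.ext
      funext g h'
      show Φ0 (a.1 + b.1) g h' = Φ0 a.1 g h' + Φ0 b.1 g h'
      have hFadd : Fc (a.1 + b.1) g h' = Fc a.1 g h' + Fc b.1 g h' := by
        show g • σ (a.1 h' + b.1 h') - σ (a.1 (g * h') + b.1 (g * h')) + σ (a.1 g + b.1 g)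
            = (g • σ (a.1 h') - σ (a.1 (g * h')) + σ (a.1 g))
              + (g • σ (b.1 h') - σ (b.1 (g * h')) + σ (b.1 g))
        rw [map_add, map_add, map_add, smul_add]
        abel
      show j (Fc (a.1 + b.1) g h') = j (Fc a.1 g h') + j (Fc b.1 g h')
      rw [hFadd]
      exact hjadd _ _ (hpFc a g h') (hpFc b g h')) with hΦdef
  have hΦ1 : ∀ c : ↥(oneCocycles N), (Φ c).1 = Φ0 c.1 := fun c => rfl
  set δ0 : ↥(oneCocycles N) →+ H2 M :=
    (QuotientAddGroup.mk' ((dOne M).range.addSubgroupOf (twoCocycles M))).comp Φ with hδ0def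
  -- coboundaries die under δ0
  have hker : ∀ c ∈ (dZero N).range.addSubgroupOf (oneCocycles N), δ0 c = 0 := by
    intro c hc
    rcases AddSubgroup.mem_addSubgroupOf.mp hc with ⟨nn, hnn⟩
    -- hnn : dZero N nn = c.1
    have hnn' : ∀ g : G, c.1 g = g • nn - nn := fun g => (congrFun hnn g).symm
    set u : G → M.carrier := fun g => j (σ (c.1 g) - (g • σ nn - σ nn)) with hudef
    have hpu : ∀ g : G, p (σ (c.1 g) - (g • σ nn - σ nn)) = 0 := by
      intro g
      rw [map_sub, map_sub, hσ, hpeq, hσ, hnn' g]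
      abel
    have hiu : ∀ g : G, i (u g) = σ (c.1 g) - (g • σ nn - σ nn) := fun g => hij _ (hpu g)
    have hd : dOne M u = Φ0 c.1 := by
      funext g h'
      apply hiinj
      have h1 : i (dOne M u g h') = g • i (u h') - i (u (g * h')) + i (u g) := by
        show i (g • u h' - u (g * h') + u g) = _
        rw [map_add, map_sub, hieq]
      rw [h1, hiu, hiu, hiu, hiΦ0 c g h']
      show g • (σ (c.1 h') - (h' • σ nn - σ nn))
          - (σ (c.1 (g * h')) - ((g * h') • σ nn - σ nn))
          + (σ (c.1 g) - (g • σ nn - σ nn))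
        = g • σ (c.1 h') - σ (c.1 (g * h')) + σ (c.1 g)
      simp only [smul_sub, smul_add, mul_smul]
      abel
    have hmem : Φ c ∈ (dOne M).range.addSubgroupOf (twoCocycles M) :=
      AddSubgroup.mem_addSubgroupOf.mpr ⟨u, hd⟩
    exact (QuotientAddGroup.eq_zero_iff _).mpr hmem
  set δbar : H1 N →+ H2 M := QuotientAddGroup.lift _ δ0 hker with hδbardef
  -- image of δ0 lies in Sha2omega
  have hrangele : ∀ c : ↥(oneCocycles N), δ0 c ∈ Sha2omega M := by
    intro c
    have hcoc : ∀ g h : G, c.1 (g * h) = g • c.1 h + c.1 g := c.2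
    rw [Sha2omega, AddSubgroup.mem_iInf]
    intro g
    rw [AddMonoidHom.mem_ker]
    have step : resH2 M (Subgroup.zpowers g).subtype (δ0 c)
        = QuotientAddGroup.mk'
          ((dOne (M.res (Subgroup.zpowers g).subtype)).range.addSubgroupOf
            (twoCocycles (M.res (Subgroup.zpowers g).subtype)))
          (resTwoCocycles M (Subgroup.zpowers g).subtype (Φ c)) := rfl
    rw [step]
    refine (QuotientAddGroup.eq_zero_iff _).mpr ?_
    -- the restriction of `c` to the cyclic subgroup is a coboundary, by flasqueness
    obtain ⟨y₀, hy₀⟩ := flasque_cyclic_coboundary hNfl c.1 hcoc g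
    set u : ↥(Subgroup.zpowers g) → M.carrier :=
      fun a => j (σ (c.1 (a : G)) - ((a : G) • σ y₀ - σ y₀)) with hudef
    have hpu : ∀ a : ↥(Subgroup.zpowers g),
        p (σ (c.1 (a : G)) - ((a : G) • σ y₀ - σ y₀)) = 0 := by
      intro a
      rw [map_sub, map_sub, hσ, hpeq, hσ, hy₀ a]
      abel
    have hiu : ∀ a, i (u a) = σ (c.1 (a : G)) - ((a : G) • σ y₀ - σ y₀) :=
      fun a => hij _ (hpu a)
    refine AddSubgroup.mem_addSubgroupOf.mpr ⟨u, ?_⟩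
    funext a b
    apply hiinj
    have h1 : dOne (M.res (Subgroup.zpowers g).subtype) u a b
        = (a : G) • u b - u (a * b) + u a := rfl
    have h2 : (resTwoCocycles M (Subgroup.zpowers g).subtype (Φ c)).1 a b
        = Φ0 c.1 (a : G) (b : G) := rfl
    rw [h1, h2]
    have h3 : i ((a : G) • u b - u (a * b) + u a)
        = (a : G) • i (u b) - i (u (a * b)) + i (u a) := by
      rw [map_add, map_sub, hieq]
    rw [h3, hiu, hiu, hiu, hiΦ0 c (a : G) (b : G)]
    have hab : ((a * b : ↥(Subgroup.zpowers g)) : G) = (a : G) * (b : G) := rfl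
    rw [hab]
    show (a : G) • (σ (c.1 (b : G)) - ((b : G) • σ y₀ - σ y₀))
        - (σ (c.1 ((a : G) * (b : G))) - (((a : G) * (b : G)) • σ y₀ - σ y₀))
        + (σ (c.1 (a : G)) - ((a : G) • σ y₀ - σ y₀))
      = (a : G) • σ (c.1 (b : G)) - σ (c.1 ((a : G) * (b : G))) + σ (c.1 (a : G))
    simp only [smul_sub, smul_add, mul_smul]
    abel
  -- injectivity of δbar
  have hinjδ : Function.Injective δbar := by
    rw [injective_iff_map_eq_zero]
    intro ξ hξ
    obtain ⟨c, rfl⟩ := QuotientAddGroup.mk'_surjective _ ξ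
    have hξ' : δ0 c = 0 := hξ
    have hmem : Φ c ∈ (dOne M).range.addSubgroupOf (twoCocycles M) :=
      (QuotientAddGroup.eq_zero_iff _).mp hξ'
    rcases AddSubgroup.mem_addSubgroupOf.mp hmem with ⟨u, hu⟩
    -- hu : dOne M u = (Φ c).1
    set w : G → S.carrier := fun g => σ (c.1 g) - i (u g) with hwdef
    have hwcoc : ∀ g h : G, w (g * h) = g • w h + w g := by
      intro g h
      have key : g • w h - w (g * h) + w g = 0 := by
        have h3 : i (g • u h - u (g * h) + u g) = Fc c.1 g h := by
          have : dOne M u g h = Φ0 c.1 g h := congrFun (congrFun hu g) h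
          have h4 : i (dOne M u g h) = Fc c.1 g h := by rw [this, hiΦ0 c g h]
          exact h4
        have h5 : i (g • u h - u (g * h) + u g)
            = g • i (u h) - i (u (g * h)) + i (u g) := by
          rw [map_add, map_sub, hieq]
        show g • (σ (c.1 h) - i (u h)) - (σ (c.1 (g * h)) - i (u (g * h)))
            + (σ (c.1 g) - i (u g)) = 0
        have h6 : g • (σ (c.1 h) - i (u h)) - (σ (c.1 (g * h)) - i (u (g * h)))
            + (σ (c.1 g) - i (u g))
            = Fc c.1 g h - (g • i (u h) - i (u (g * h)) + i (u g)) := by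
          show _ = (g • σ (c.1 h) - σ (c.1 (g * h)) + σ (c.1 g)) - _
          simp only [smul_sub]
          abel
        rw [h6, ← h5, h3, sub_self]
      calc w (g * h) = g • w h + w g - (g • w h - w (g * h) + w g) := by abel
        _ = g • w h + w g := by rw [key, sub_zero]
    obtain ⟨s₀, hs₀⟩ := perm_H1_vanish hSperm w hwcoc
    have hceq : c.1 = dZero N (p s₀) := by
      funext g
      have h1 : p (w g) = c.1 g := by
        show p (σ (c.1 g) - i (u g)) = c.1 g
        rw [map_sub, hσ]
        have : p (i (u g)) = 0 := by
          have : i (u g) ∈ p.ker := by rw [← hrange]; exact ⟨u g, rfl⟩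
          exact this
        rw [this, sub_zero]
      rw [← h1, hs₀ g, map_sub, hpeq]
      rfl
    exact (QuotientAddGroup.eq_zero_iff _).mpr
      (AddSubgroup.mem_addSubgroupOf.mpr ⟨p s₀, hceq.symm⟩)
  -- range of δbar is Sha2omega
  have hrangeeq : δbar.range = Sha2omega M := by
    ext ξ
    constructor
    · rintro ⟨η, rfl⟩
      obtain ⟨c, rfl⟩ := QuotientAddGroup.mk'_surjective _ η
      exact hrangele c
    · intro hξ
      obtain ⟨f, rfl⟩ := QuotientAddGroup.mk'_surjective _ ξ
      have hcocf : ∀ g h k : G, g • f.1 h k + f.1 g (h * k) = f.1 (g * h) k + f.1 g h := f.2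
      -- cyclic restrictions of `f` are coboundaries
      have hcyc : ∀ g : G, ∃ u : ↥(Subgroup.zpowers g) → M.carrier,
          ∀ a b : ↥(Subgroup.zpowers g),
            f.1 (a : G) (b : G) = (a : G) • u b - u (a * b) + u a := by
        intro g
        have hmem := AddSubgroup.mem_iInf.mp hξ g
        replace hmem := AddMonoidHom.mem_ker.mp hmem
        have hmem2 : (QuotientAddGroup.mk'
            ((dOne (M.res (Subgroup.zpowers g).subtype)).range.addSubgroupOf
              (twoCocycles (M.res (Subgroup.zpowers g).subtype))))
            (resTwoCocycles M (Subgroup.zpowers g).subtype f) = 0 := hmem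
        have hmem3 := (QuotientAddGroup.eq_zero_iff _).mp hmem2
        rcases AddSubgroup.mem_addSubgroupOf.mp hmem3 with ⟨u, hu⟩
        refine ⟨u, fun a b => ?_⟩
        have := congrFun (congrFun hu a) b
        exact this.symm
      -- transfer to `S` and kill the class there
      set fS : G → G → S.carrier := fun g h' => i (f.1 g h') with hfSdef
      have hfSc : ∀ g h k : G, g • fS h k + fS g (h * k) = fS (g * h) k + fS g h := by
        intro g h k
        show g • i (f.1 h k) + i (f.1 g (h * k)) = i (f.1 (g * h) k) + i (f.1 g h)
        rw [← hieq, ← map_add, ← map_add, hcocf g h k]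
      have hfSres : ∀ g : G, ∃ u' : ↥(Subgroup.zpowers g) → S.carrier,
          ∀ a b : ↥(Subgroup.zpowers g),
            fS (a : G) (b : G) = (a : G) • u' b - u' (a * b) + u' a := by
        intro g
        obtain ⟨u, hu⟩ := hcyc g
        refine ⟨fun a => i (u a), fun a b => ?_⟩
        show i (f.1 (a : G) (b : G)) = (a : G) • i (u b) - i (u (a * b)) + i (u a)
        rw [hu a b, map_add, map_sub, hieq]
      obtain ⟨t, ht⟩ := perm_sha2_vanish hSperm fS hfSc hfSres
      set c : G → N.carrier := fun g => p (t g) with hcdef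
      have hccoc : ∀ g h : G, c (g * h) = g • c h + c g := by
        intro g h
        have h1 : p (fS g h) = 0 := by
          have : fS g h ∈ p.ker := by rw [← hrange]; exact ⟨f.1 g h, rfl⟩
          exact this
        rw [ht g h, map_add, map_sub, hpeq] at h1
        show p (t (g * h)) = g • p (t h) + p (t g)
        have h2 : p (t (g * h))
            = g • p (t h) + p (t g) - (g • p (t h) - p (t (g * h)) + p (t g)) := by abel
        rw [h2, h1, sub_zero]
      set C : ↥(oneCocycles N) := ⟨c, hccoc⟩ with hCdef
      set u₀ : G → M.carrier := fun g => j (t g - σ (c g)) with hu₀def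
      have hpu₀ : ∀ g : G, p (t g - σ (c g)) = 0 := by
        intro g
        rw [map_sub, hσ]
        show p (t g) - p (t g) = 0
        rw [sub_self]
      have hiu₀ : ∀ g : G, i (u₀ g) = t g - σ (c g) := fun g => hij _ (hpu₀ g)
      have hdOne : dOne M u₀ = f.1 - (Φ C).1 := by
        funext g h
        apply hiinj
        have h5 : i (dOne M u₀ g h) = g • i (u₀ h) - i (u₀ (g * h)) + i (u₀ g) := by
          show i (g • u₀ h - u₀ (g * h) + u₀ g) = _
          rw [map_add, map_sub, hieq]
        have h6 : i ((f.1 - (Φ C).1) g h) = i (f.1 g h) - i (Φ0 c g h) := by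
          show i (f.1 g h - Φ0 c g h) = _
          rw [map_sub]
        rw [h5, h6, hiu₀, hiu₀, hiu₀, hiΦ0 C g h]
        have h7 : i (f.1 g h) = g • t h - t (g * h) + t g := ht g h
        rw [h7]
        show g • (t h - σ (c h)) - (t (g * h) - σ (c (g * h))) + (t g - σ (c g))
            = (g • t h - t (g * h) + t g) - (g • σ (c h) - σ (c (g * h)) + σ (c g))
        simp only [smul_sub]
        abel
      refine ⟨QuotientAddGroup.mk' _ C, ?_⟩
      have hδC : δbar (QuotientAddGroup.mk' _ C)
          = QuotientAddGroup.mk' ((dOne M).range.addSubgroupOf (twoCocycles M)) (Φ C) := rfl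
      rw [hδC]; refine (QuotientAddGroup.mk'_eq_mk' _).mpr ?_
      refine ⟨f - Φ C, ?_, by abel⟩
      refine AddSubgroup.mem_addSubgroupOf.mpr ⟨u₀, ?_⟩
      exact hdOne
  exact ⟨(AddEquiv.addSubgroupCongr hrangeeq.symm).trans
    (AddMonoidHom.ofInjective hinjδ).symm⟩
end
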